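/- Let f : ℝⁿ → ℝᵐ be twice continuously differentiable, let y ∈ ℝᵐ, and let θ* be a critical point of E. Suppose there exists a vector v ∈ ℝⁿ with D²E(θ*)(v, v) − ‖Df(θ*)v‖² < 0 (i.e. the matrix S = ∇²E(θ*) − J(θ*)ᵀJ(θ*) is not positive semidefinite). Then there exists α₀ ≥ 0 such that for every α > α₀ the Hessian quadratic form of E_α at θ* is negative in the direction v, i.e. D²E_α(θ*)(v, v) < 0, and consequently θ* is not a local minimum point of E_α for any α > α₀. -/

import Mathlib

open scoped RealInnerProductSpace

variable {n m : ℕ}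

local notation "En" => EuclideanSpace ℝ (Fin n)
local notation "Em" => EuclideanSpace ℝ (Fin m)

lemma hasFDerivAt_half_normsq (f : En → Em) (y : Em) (hf : Differentiable ℝ f) (θ : En) :
    HasFDerivAt (fun θ => (1 / 2 : ℝ) * ‖y - f θ‖ ^ 2)
      (((innerSL ℝ (f θ - y)).comp (fderiv ℝ f θ))) θ := by
  have hg : HasFDerivAt (fun θ : En => y - f θ) (-(fderiv ℝ f θ)) θ :=
    (hf θ).hasFDerivAt.const_sub y
  have H := (hg.inner ℝ hg).const_mul (1/2 : ℝ)
  have hfun : (fun θ : En => (1 / 2 : ℝ) * ‖y - f θ‖ ^ 2)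
      = fun θ : En => (1/2 : ℝ) * ⟪y - f θ, y - f θ⟫ := by
    funext t; rw [real_inner_self_eq_norm_sq]
  rw [hfun]
  refine H.congr_fderiv ?_
  ext w
  simp only [ContinuousLinearMap.coe_smul', Pi.smul_apply, ContinuousLinearMap.comp_apply,
    ContinuousLinearMap.prod_apply, ContinuousLinearMap.neg_apply, fderivInnerCLM_apply,
    innerSL_apply_apply, smul_eq_mul, inner_neg_right, inner_neg_left, inner_sub_left, inner_sub_right]
  rw [real_inner_comm ((fderiv ℝ f θ) w) y, real_inner_comm ((fderiv ℝ f θ) w) (f θ)]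
  ring

lemma fderiv_lsE_eq (f : En → Em) (y : Em) (hf : Differentiable ℝ f) :
    fderiv ℝ (fun θ => (1 / 2 : ℝ) * ‖y - f θ‖ ^ 2)
      = fun θ => ((innerSL ℝ (f θ - y)).comp (fderiv ℝ f θ)) := by
  funext θ
  exact (hasFDerivAt_half_normsq f y hf θ).fderiv

noncomputable def innerR : Em →L[ℝ] Em →L[ℝ] ℝ := innerSL ℝ

@[simp] lemma innerR_apply (x w : Em) : innerR x w = ⟪x, w⟫ := rfl

lemma hessian_hasFDerivAt (f : En → Em) (y : Em) (hf : ContDiff ℝ 2 f) (θs : En) :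
    HasFDerivAt (fderiv ℝ (fun θ => (1 / 2 : ℝ) * ‖y - f θ‖ ^ 2))
      ((ContinuousLinearMap.compL ℝ En Em ℝ (innerSL ℝ (f θs - y) : Em →L[ℝ] ℝ)).comp
          (fderiv ℝ (fderiv ℝ f) θs)
        + ((ContinuousLinearMap.compL ℝ En Em ℝ).flip (fderiv ℝ f θs)).comp
          ((innerR (m := m)).comp (fderiv ℝ f θs))) θs := by
  have hdiff : Differentiable ℝ f := hf.differentiable two_ne_zero
  have hJ : ContDiff ℝ 1 (fderiv ℝ f) := hf.fderiv_right (le_refl _)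
  have hc : HasFDerivAt (fun θ => innerSL ℝ (f θ - y))
      ((innerR (m := m)).comp (fderiv ℝ f θs)) θs := by
    have h1 : HasFDerivAt (fun θ => f θ - y) (fderiv ℝ f θs) θs :=
      (hdiff θs).hasFDerivAt.sub_const y
    exact (innerR (m := m)).hasFDerivAt.comp θs h1
  have hd : HasFDerivAt (fderiv ℝ f) (fderiv ℝ (fderiv ℝ f) θs) θs :=
    ((hJ.differentiable one_ne_zero) θs).hasFDerivAt
  rw [fderiv_lsE_eq f y hdiff]
  exact hc.clm_comp hd

lemma hessian_apply (f : En → Em) (y : Em) (hf : ContDiff ℝ 2 f) (θs v : En) :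
    fderiv ℝ (fderiv ℝ (fun θ => (1 / 2 : ℝ) * ‖y - f θ‖ ^ 2)) θs v v
      = ‖fderiv ℝ f θs v‖ ^ 2 - ⟪y - f θs, fderiv ℝ (fderiv ℝ f) θs v v⟫ := by
  rw [(hessian_hasFDerivAt f y hf θs).fderiv]
  simp only [ContinuousLinearMap.add_apply, ContinuousLinearMap.comp_apply,
    ContinuousLinearMap.compL_apply, ContinuousLinearMap.flip_apply, innerSL_apply_apply,
    innerR_apply]
  rw [← real_inner_self_eq_norm_sq, inner_sub_left, inner_sub_left]
  ring

lemma not_isLocalMin_of_second_deriv_neg (g : En → ℝ) (hg : Differentiable ℝ g)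
    {θs v : En} {D : En →L[ℝ] En →L[ℝ] ℝ}
    (hD : HasFDerivAt (fderiv ℝ g) D θs)
    (h1 : fderiv ℝ g θs v = 0) (h2 : D v v < 0) : ¬ IsLocalMin g θs := by
  intro hmin
  set L : ℝ → En := fun t => θs + t • v with hLdef
  have hL : ∀ t : ℝ, HasDerivAt L v t := fun t => by
    simpa [hLdef] using ((hasDerivAt_id t).smul_const v).const_add θs
  have hL0 : L 0 = θs := by simp [hLdef]
  have hLcont : Continuous L := by
    unfold L; fun_prop
  set φ : ℝ → ℝ := fun t => g (L t) with hφdef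
  have hφ' : ∀ t : ℝ, HasDerivAt φ (fderiv ℝ g (L t) v) t := fun t =>
    (hg (L t)).hasFDerivAt.comp_hasDerivAt t (hL t)
  have hderiv : deriv φ = fun t => fderiv ℝ g (L t) v := funext fun t => (hφ' t).deriv
  have hφ0 : deriv φ 0 = 0 := by rw [hderiv]; simp only [hL0, h1]
  -- second derivative of φ at 0
  have hD2 : HasFDerivAt (fun θ => fderiv ℝ g θ v)
      ((ContinuousLinearMap.apply ℝ ℝ v).comp D) θs :=
    (ContinuousLinearMap.apply ℝ ℝ v).hasFDerivAt.comp θs hD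
  have hφ'' : HasDerivAt (deriv φ) (D v v) 0 := by
    rw [hderiv]
    rw [← hL0] at hD2
    exact hD2.comp_hasDerivAt 0 (hL 0)
  -- slope argument: deriv φ < 0 on a right neighborhood
  have hsl := hasDerivAt_iff_tendsto_slope.mp hφ''
  have hslneg : ∀ᶠ t in nhdsWithin (0:ℝ) {(0:ℝ)}ᶜ, slope (deriv φ) 0 t < 0 :=
    hsl.eventually_lt_const h2
  have hmono : nhdsWithin (0:ℝ) (Set.Ioi 0) ≤ nhdsWithin (0:ℝ) {(0:ℝ)}ᶜ :=
    nhdsWithin_mono 0 (fun x hx => ne_of_gt hx)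
  have hev : ∀ᶠ t in nhdsWithin (0:ℝ) (Set.Ioi 0), deriv φ t < 0 := by
    filter_upwards [hslneg.filter_mono hmono, self_mem_nhdsWithin] with t hts (ht : t ∈ Set.Ioi 0)
    rw [slope_def_field] at hts
    rw [div_neg_iff] at hts
    rcases hts with ⟨_, h⟩ | ⟨h, _⟩
    · linarith [Set.mem_Ioi.mp ht]
    · rw [hφ0] at h; linarith
  obtain ⟨u, hu, hsub⟩ := mem_nhdsGT_iff_exists_Ioo_subset.mp hev
  have hu0 : (0:ℝ) < u := hu
  -- φ strictly decreasing on [0, u]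
  have hanti : StrictAntiOn φ (Set.Icc 0 u) := by
    apply strictAntiOn_of_deriv_neg (convex_Icc 0 u)
      ((hg.continuous.comp hLcont).continuousOn)
    intro t ht
    rw [interior_Icc] at ht
    exact hsub ht
  -- contradiction with local min
  have hminφ : IsLocalMin φ 0 := by
    rw [← hL0] at hmin
    exact hmin.comp_continuous hLcont.continuousAt
  have hge : ∀ᶠ t in nhdsWithin (0:ℝ) (Set.Ioi 0), φ 0 ≤ φ t :=
    (hminφ.filter_mono nhdsWithin_le_nhds : _)
  have hlt : ∀ᶠ t in nhdsWithin (0:ℝ) (Set.Ioi 0), φ t < φ 0 := by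
    filter_upwards [Ioo_mem_nhdsGT_of_mem (Set.mem_Ico.mpr ⟨le_rfl, hu0⟩)] with t ht
    exact hanti (Set.mem_Icc.mpr ⟨le_rfl, hu0.le⟩) (Set.mem_Icc.mpr ⟨ht.1.le, ht.2.le⟩) ht.1
  obtain ⟨t, h1', h2'⟩ := (hge.and hlt).exists
  linarith


/-- The least-squares objective `E(θ) = ½‖y − f(θ)‖²`. -/
noncomputable def lsE {n m : ℕ} (f : EuclideanSpace ℝ (Fin n) → EuclideanSpace ℝ (Fin m))
    (y : EuclideanSpace ℝ (Fin m)) (θ : EuclideanSpace ℝ (Fin n)) : ℝ :=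
  (1 / 2) * ‖y - f θ‖ ^ 2

/-- The `α`-expanded objective at the point `θs`:
`E_α(θ) = ½‖ŷ − f(θ)‖²` with `ŷ = y + α • (y − f(θs))`. -/
noncomputable def lsEexp {n m : ℕ} (f : EuclideanSpace ℝ (Fin n) → EuclideanSpace ℝ (Fin m))
    (y : EuclideanSpace ℝ (Fin m)) (θs : EuclideanSpace ℝ (Fin n)) (α : ℝ)
    (θ : EuclideanSpace ℝ (Fin n)) : ℝ :=
  (1 / 2) * ‖(y + α • (y - f θs)) - f θ‖ ^ 2

theorem stmt_3 {n m : ℕ} (f : EuclideanSpace ℝ (Fin n) → EuclideanSpace ℝ (Fin m))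
    (y : EuclideanSpace ℝ (Fin m)) (θs : EuclideanSpace ℝ (Fin n))
    (hf : ContDiff ℝ 2 f)
    (hcrit : fderiv ℝ (lsE f y) θs = 0)
    (v : EuclideanSpace ℝ (Fin n))
    (hv : fderiv ℝ (fderiv ℝ (lsE f y)) θs v v - ‖fderiv ℝ f θs v‖ ^ 2 < 0) :
    ∃ α₀ : ℝ, 0 ≤ α₀ ∧ ∀ α : ℝ, α₀ < α →
      fderiv ℝ (fderiv ℝ (lsEexp f y θs α)) θs v v < 0 ∧
      ¬ IsLocalMin (lsEexp f y θs α) θs := by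
  have hdiff : Differentiable ℝ f := hf.differentiable two_ne_zero
  have hvc : 0 < ⟪y - f θs, fderiv ℝ (fderiv ℝ f) θs v v⟫ := by
    rw [show lsE f y = fun θ => (1 / 2 : ℝ) * ‖y - f θ‖ ^ 2 from rfl,
      hessian_apply f y hf θs v] at hv
    linarith
  set c : ℝ := ⟪y - f θs, fderiv ℝ (fderiv ℝ f) θs v v⟫ with hcdef
  refine ⟨max 0 (‖fderiv ℝ f θs v‖ ^ 2 / c - 1), le_max_left _ _, fun α hα => ?_⟩
  set yh := y + α • (y - f θs) with hyh
  have hyhs : yh - f θs = (1 + α) • (y - f θs) := by rw [hyh]; module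
  have hyhs' : f θs - yh = (1 + α) • (f θs - y) := by rw [hyh]; module
  have hEα : lsEexp f y θs α = fun θ => (1 / 2 : ℝ) * ‖yh - f θ‖ ^ 2 := rfl
  have hHα : fderiv ℝ (fderiv ℝ (lsEexp f y θs α)) θs v v
      = ‖fderiv ℝ f θs v‖ ^ 2 - (1 + α) * c := by
    rw [hEα, hessian_apply f yh hf θs v, hyhs, real_inner_smul_left]
  have hneg : ‖fderiv ℝ f θs v‖ ^ 2 - (1 + α) * c < 0 := by
    have h1 : ‖fderiv ℝ f θs v‖ ^ 2 / c - 1 < α := (le_max_right _ _).trans_lt hα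
    have h2 := (div_lt_iff₀ hvc).mp (by linarith : ‖fderiv ℝ f θs v‖ ^ 2 / c < 1 + α)
    linarith
  refine ⟨by rw [hHα]; exact hneg, ?_⟩
  -- critical point of expanded objective
  have hcrit0 : ⟪f θs - y, fderiv ℝ f θs v⟫ = 0 := by
    have hc2 : (innerSL ℝ (f θs - y)).comp (fderiv ℝ f θs) = 0 := by
      rw [← (hasFDerivAt_half_normsq f y hdiff θs).fderiv]; exact hcrit
    have := congrFun (congrArg DFunLike.coe hc2) v
    simpa only [ContinuousLinearMap.comp_apply, innerSL_apply_apply,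
      ContinuousLinearMap.zero_apply, ContinuousLinearMap.coe_zero, Pi.zero_apply,
      ContinuousLinearMap.coe_comp', Function.comp_apply] using this
  have hcritα : fderiv ℝ (lsEexp f y θs α) θs v = 0 := by
    rw [hEα, (hasFDerivAt_half_normsq f yh hdiff θs).fderiv]
    simp only [ContinuousLinearMap.comp_apply, innerSL_apply_apply]
    rw [hyhs', real_inner_smul_left, hcrit0, mul_zero]
  have hD := hessian_hasFDerivAt f yh hf θs
  have hDvv : ((ContinuousLinearMap.compL ℝ (EuclideanSpace ℝ (Fin n)) (EuclideanSpace ℝ (Fin m)) ℝ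
        (innerSL ℝ (f θs - yh) : EuclideanSpace ℝ (Fin m) →L[ℝ] ℝ)).comp
          (fderiv ℝ (fderiv ℝ f) θs)
        + ((ContinuousLinearMap.compL ℝ (EuclideanSpace ℝ (Fin n)) (EuclideanSpace ℝ (Fin m)) ℝ).flip
            (fderiv ℝ f θs)).comp
          ((innerR (m := m)).comp (fderiv ℝ f θs))) v v < 0 := by
    have heq : fderiv ℝ (fderiv ℝ (fun θ => (1 / 2 : ℝ) * ‖yh - f θ‖ ^ 2)) θs
        = _ := hD.fderiv
    rw [← heq, ← hEα, hHα]
    exact hneg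
  exact not_isLocalMin_of_second_deriv_neg (lsEexp f y θs α)
    (fun x => (hasFDerivAt_half_normsq f yh hdiff x).differentiableAt) hD hcritα hDvv
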